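/- arXiv:2509.08121 — 4 statements merged into one kernel-verified Lean document; each statement's English description precedes it below -/
import Mathlib

section
/- Let A be an n×n real positive semidefinite matrix written in block form A = [[B, x],[x^T, a]] with B ∈ ℝ^{(n−1)×(n−1)}, x ∈ ℝ^{n−1}, and a > 0. Then per(A) ≤ a · per(B + (1/a)·x x^T). -/
open Matrix BigOperators

/-- The permanent of a square matrix. -/
noncomputable def per {α : Type*} [DecidableEq α] [Fintype α] (A : Matrix α α ℝ) : ℝ :=
  ∑ σ : Equiv.Perm α, ∏ i, A i (σ i)

section Helpers
open Equiv Finset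

section Aux
variable {κ ι 𝒮 : Type*} [Fintype κ] [DecidableEq κ] [Fintype ι] [Fintype 𝒮]

lemma prod_sum_eq (f : κ → ι → ℝ) :
    (∏ i, ∑ r, f i r) = ∑ g : κ → ι, ∏ i, f i (g i) := by
  rw [Finset.prod_univ_sum]
  exact Fintype.sum_congr _ _ (fun g => rfl)

lemma inner_reindex (zs zt : κ → ι → ℝ) (π : Equiv.Perm κ) :
    ∑ ρ : Equiv.Perm κ, ∑ g : κ → ι, (∏ i, zs (π i) (g i)) * (∏ i, zt (ρ i) (g i))
      = ∑ σ : Equiv.Perm κ, ∏ i, ∑ r, zs i r * zt (σ i) r := by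
  have step1 : ∀ (ρ : Equiv.Perm κ) (g : κ → ι),
      (∏ i, zs (π i) (g i)) * (∏ i, zt (ρ i) (g i))
        = ∏ j, zs j (g (π.symm j)) * zt (ρ (π.symm j)) (g (π.symm j)) := by
    intro ρ g
    rw [← Finset.prod_mul_distrib]
    rw [← Equiv.prod_comp π (fun j => zs j (g (π.symm j)) * zt (ρ (π.symm j)) (g (π.symm j)))]
    simp
  calc ∑ ρ : Equiv.Perm κ, ∑ g : κ → ι, (∏ i, zs (π i) (g i)) * (∏ i, zt (ρ i) (g i))
      = ∑ ρ : Equiv.Perm κ, ∑ g : κ → ι,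
          ∏ j, zs j (g (π.symm j)) * zt (ρ (π.symm j)) (g (π.symm j)) := by
        exact Finset.sum_congr rfl fun ρ _ => Finset.sum_congr rfl fun g _ => step1 ρ g
    _ = ∑ ρ : Equiv.Perm κ, ∑ h : κ → ι,
          ∏ j, zs j (h j) * zt (ρ (π.symm j)) (h j) := by
        refine Finset.sum_congr rfl fun ρ _ => ?_
        exact (Equiv.sum_comp (Equiv.arrowCongr π (Equiv.refl ι))
          (fun h => ∏ j, zs j (h j) * zt (ρ (π.symm j)) (h j))).symm ▸ rfl
    _ = ∑ σ : Equiv.Perm κ, ∑ h : κ → ι, ∏ j, zs j (h j) * zt (σ j) (h j) := by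
        refine (Equiv.sum_comp (Equiv.mulRight π⁻¹)
          (fun σ => ∑ h : κ → ι, ∏ j, zs j (h j) * zt (σ j) (h j))).symm ▸ ?_
        refine Finset.sum_congr rfl fun ρ _ => Finset.sum_congr rfl fun h _ => ?_
        simp [Equiv.Perm.mul_apply]
    _ = ∑ σ : Equiv.Perm κ, ∏ i, ∑ r, zs i r * zt (σ i) r := by
        refine Finset.sum_congr rfl fun σ _ => ?_
        rw [prod_sum_eq (fun i r => zs i r * zt (σ i) r)]

end Aux

section Aux2
variable {κ ι 𝒮 : Type*} [Fintype κ] [DecidableEq κ] [Fintype ι] [Fintype 𝒮]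

lemma lemN (ψ : 𝒮 → ℝ) (z : 𝒮 → κ → ι → ℝ) :
    0 ≤ ∑ s, ∑ t, ψ s * ψ t * ∑ σ : Equiv.Perm κ, ∏ i, ∑ r, z s i r * z t (σ i) r := by
  have key : (Fintype.card (Equiv.Perm κ) : ℝ) *
      (∑ s, ∑ t, ψ s * ψ t * ∑ σ : Equiv.Perm κ, ∏ i, ∑ r, z s i r * z t (σ i) r)
      = ∑ g : κ → ι, (∑ s, ∑ π : Equiv.Perm κ, ψ s * ∏ i, z s (π i) (g i))^2 := by
    have expand : ∀ g : κ → ι,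
        (∑ s, ∑ π : Equiv.Perm κ, ψ s * ∏ i, z s (π i) (g i))^2
          = ∑ s, ∑ t, ∑ π : Equiv.Perm κ, ∑ ρ : Equiv.Perm κ,
              ψ s * ψ t * ((∏ i, z s (π i) (g i)) * (∏ i, z t (ρ i) (g i))) := by
      intro g
      rw [sq, Finset.sum_mul_sum]
      refine Finset.sum_congr rfl fun s _ => Finset.sum_congr rfl fun t _ => ?_
      rw [Finset.sum_mul_sum]
      refine Finset.sum_congr rfl fun π _ => Finset.sum_congr rfl fun ρ _ => ?_
      ring
    calc (Fintype.card (Equiv.Perm κ) : ℝ) *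
        (∑ s, ∑ t, ψ s * ψ t * ∑ σ : Equiv.Perm κ, ∏ i, ∑ r, z s i r * z t (σ i) r)
        = ∑ s, ∑ t, ∑ π : Equiv.Perm κ,
            ψ s * ψ t * ∑ σ : Equiv.Perm κ, ∏ i, ∑ r, z s i r * z t (σ i) r := by
          rw [Finset.mul_sum]
          refine Finset.sum_congr rfl fun s _ => ?_
          rw [Finset.mul_sum]
          refine Finset.sum_congr rfl fun t _ => ?_
          rw [Finset.sum_const, nsmul_eq_mul, Finset.card_univ]
      _ = ∑ s, ∑ t, ∑ π : Equiv.Perm κ, ∑ ρ : Equiv.Perm κ, ∑ g : κ → ι,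
            ψ s * ψ t * ((∏ i, z s (π i) (g i)) * (∏ i, z t (ρ i) (g i))) := by
          refine Finset.sum_congr rfl fun s _ => Finset.sum_congr rfl fun t _ =>
            Finset.sum_congr rfl fun π _ => ?_
          rw [← inner_reindex (z s) (z t) π]
          rw [Finset.mul_sum]
          refine Finset.sum_congr rfl fun ρ _ => ?_
          rw [Finset.mul_sum]
      _ = ∑ s, ∑ t, ∑ π : Equiv.Perm κ, ∑ g : κ → ι, ∑ ρ : Equiv.Perm κ,
            ψ s * ψ t * ((∏ i, z s (π i) (g i)) * (∏ i, z t (ρ i) (g i))) := by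
          refine Finset.sum_congr rfl fun s _ => Finset.sum_congr rfl fun t _ =>
            Finset.sum_congr rfl fun π _ => ?_
          exact Finset.sum_comm
      _ = ∑ s, ∑ t, ∑ g : κ → ι, ∑ π : Equiv.Perm κ, ∑ ρ : Equiv.Perm κ,
            ψ s * ψ t * ((∏ i, z s (π i) (g i)) * (∏ i, z t (ρ i) (g i))) := by
          refine Finset.sum_congr rfl fun s _ => Finset.sum_congr rfl fun t _ => ?_
          exact Finset.sum_comm
      _ = ∑ s, ∑ g : κ → ι, ∑ t, ∑ π : Equiv.Perm κ, ∑ ρ : Equiv.Perm κ,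
            ψ s * ψ t * ((∏ i, z s (π i) (g i)) * (∏ i, z t (ρ i) (g i))) := by
          refine Finset.sum_congr rfl fun s _ => ?_
          exact Finset.sum_comm
      _ = ∑ g : κ → ι, ∑ s, ∑ t, ∑ π : Equiv.Perm κ, ∑ ρ : Equiv.Perm κ,
            ψ s * ψ t * ((∏ i, z s (π i) (g i)) * (∏ i, z t (ρ i) (g i))) := by
          exact Finset.sum_comm
      _ = ∑ g : κ → ι, (∑ s, ∑ π : Equiv.Perm κ, ψ s * ∏ i, z s (π i) (g i))^2 := by
          exact Finset.sum_congr rfl fun g _ => (expand g).symm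
  have hpos : (0:ℝ) < (Fintype.card (Equiv.Perm κ) : ℝ) := by
    exact_mod_cast Fintype.card_pos
  have hsq : (0:ℝ) ≤ ∑ g : κ → ι, (∑ s, ∑ π : Equiv.Perm κ, ψ s * ∏ i, z s (π i) (g i))^2 :=
    Finset.sum_nonneg fun g _ => sq_nonneg _
  nlinarith [key, hpos, hsq]

end Aux2

lemma match_iff_image {m : ℕ} (σ : Equiv.Perm (Fin m)) (S T : Finset (Fin m)) :
    (∀ i, i ∈ S ↔ σ i ∈ T) ↔ T = S.image σ := by
  constructor
  · intro h
    ext j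
    rw [Finset.mem_image]
    constructor
    · intro hj
      exact ⟨σ.symm j, (h (σ.symm j)).mpr (by simpa using hj), by simp⟩
    · rintro ⟨i, hi, rfl⟩
      exact (h i).mp hi
  · rintro rfl i
    rw [Finset.mem_image]
    constructor
    · intro hi; exact ⟨i, hi, rfl⟩
    · rintro ⟨i', hi', he⟩
      rwa [← σ.injective he]

lemma lemM {m : ℕ} (B : Matrix (Fin m) (Fin m) ℝ) (x : Fin m → ℝ)
    (σ : Equiv.Perm (Fin m)) (S : Finset (Fin m)) :
    (∏ i ∈ S, x (σ i)) * ∏ i ∈ univ \ S, B i (σ i)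
      = ∑ T : Finset (Fin m), (∏ j ∈ T, x j) *
          (if (∀ i, i ∈ S ↔ σ i ∈ T) then ∏ i ∈ univ \ S, B i (σ i) else 0) := by
  rw [Finset.sum_eq_single (S.image σ)]
  · rw [if_pos ((match_iff_image σ S _).mpr rfl)]
    congr 1
    exact (Finset.prod_image (fun i _ j _ h => σ.injective h)).symm
  · intro T _ hT
    rw [if_neg, mul_zero]
    intro h
    exact hT ((match_iff_image σ S T).mp h)
  · intro h
    exact absurd (Finset.mem_univ _) h

noncomputable def zAux {m : ℕ} (v : Fin m → Fin m → ℝ) (S : Finset (Fin m)) (i : Fin m)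
    (o : Option (Fin m)) : ℝ :=
  if i ∈ S then (if o = none then 1 else 0) else Option.elim o 0 (v i)

noncomputable def psiAux {m : ℕ} (x : Fin m → ℝ) (a : ℝ) (S : Finset (Fin m)) : ℝ :=
  if 2 ≤ S.card then (∏ i ∈ S, x i) * (Real.sqrt a * (Real.sqrt a)⁻¹ ^ S.card) else 0

lemma innerAux {m : ℕ} (B : Matrix (Fin m) (Fin m) ℝ) (v : Fin m → Fin m → ℝ)
    (hB : ∀ i j, B i j = ∑ r, v i r * v j r) (S T : Finset (Fin m)) (i j : Fin m) :
    (∑ o : Option (Fin m), zAux v S i o * zAux v T j o)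
      = if i ∈ S then (if j ∈ T then 1 else 0) else (if j ∈ T then 0 else B i j) := by
  rw [Fintype.sum_option]
  by_cases hiS : i ∈ S <;> by_cases hjT : j ∈ T <;> simp [zAux, hiS, hjT, hB]

lemma hCAux {m : ℕ} (B : Matrix (Fin m) (Fin m) ℝ) (v : Fin m → Fin m → ℝ)
    (hB : ∀ i j, B i j = ∑ r, v i r * v j r) (S T : Finset (Fin m)) (σ : Equiv.Perm (Fin m)) :
    (∏ i, ∑ o : Option (Fin m), zAux v S i o * zAux v T (σ i) o)
      = if (∀ i, i ∈ S ↔ σ i ∈ T) then ∏ i ∈ univ \ S, B i (σ i) else 0 := by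
  by_cases h : ∀ i, i ∈ S ↔ σ i ∈ T
  · rw [if_pos h, ← Finset.prod_sdiff (Finset.subset_univ S)]
    have h1 : (∏ i ∈ S, ∑ o : Option (Fin m), zAux v S i o * zAux v T (σ i) o) = 1 :=
      Finset.prod_eq_one fun i hi => by
        rw [innerAux B v hB]
        simp [hi, (h i).mp hi]
    have h2 : (∏ i ∈ univ \ S, ∑ o : Option (Fin m), zAux v S i o * zAux v T (σ i) o)
        = ∏ i ∈ univ \ S, B i (σ i) :=
      Finset.prod_congr rfl fun i hi => by
        have hiS : i ∉ S := (Finset.mem_sdiff.mp hi).2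
        have hT : σ i ∉ T := fun hc => hiS ((h i).mpr hc)
        rw [innerAux B v hB]
        simp [hiS, hT]
    rw [h1, h2, mul_one]
  · rw [if_neg h]
    push_neg at h
    obtain ⟨i, hi⟩ := h
    apply Finset.prod_eq_zero (Finset.mem_univ i)
    rw [innerAux B v hB]
    rcases hi with ⟨hiS, hT⟩ | ⟨hiS, hT⟩ <;> simp [hiS, hT]

lemma lemE3 {m : ℕ} (B : Matrix (Fin m) (Fin m) ℝ) (x : Fin m → ℝ) (a : ℝ) (ha : 0 < a)
    (v : Fin m → Fin m → ℝ) (hB : ∀ i j, B i j = ∑ r, v i r * v j r) :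
    0 ≤ ∑ S ∈ univ.powerset.filter (fun S : Finset (Fin m) => ¬ S.card ≤ 1),
        ∑ σ : Equiv.Perm (Fin m),
          (a * a⁻¹ ^ S.card) * ((∏ i ∈ S, x i * x (σ i)) * ∏ i ∈ univ \ S, B i (σ i)) := by
  have key := lemN (psiAux x a) (zAux v)
  refine le_trans key (le_of_eq ?_)
  rw [Finset.powerset_univ, Finset.sum_filter]
  refine Finset.sum_congr rfl fun S _ => ?_
  have hsqrt : Real.sqrt a * Real.sqrt a = a := Real.mul_self_sqrt ha.le
  calc ∑ t, psiAux x a S * psiAux x a t *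
        ∑ σ : Equiv.Perm (Fin m), ∏ i, ∑ r, zAux v S i r * zAux v t (σ i) r
      = ∑ T, ∑ σ : Equiv.Perm (Fin m), psiAux x a S * psiAux x a T *
          (if (∀ i, i ∈ S ↔ σ i ∈ T) then ∏ i ∈ univ \ S, B i (σ i) else 0) := by
        refine Finset.sum_congr rfl fun T _ => ?_
        rw [Finset.mul_sum]
        refine Finset.sum_congr rfl fun σ _ => ?_
        rw [hCAux B v hB S T σ]
    _ = ∑ σ : Equiv.Perm (Fin m), ∑ T, psiAux x a S * psiAux x a T *
          (if (∀ i, i ∈ S ↔ σ i ∈ T) then ∏ i ∈ univ \ S, B i (σ i) else 0) :=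
        Finset.sum_comm
    _ = (if ¬S.card ≤ 1 then ∑ σ : Equiv.Perm (Fin m),
          (a * a⁻¹ ^ S.card) * ((∏ i ∈ S, x i * x (σ i)) * ∏ i ∈ univ \ S, B i (σ i))
          else 0) := by
        by_cases hS : S.card ≤ 1
        · rw [if_neg (not_not_intro hS)]
          have hψ : psiAux x a S = 0 := by
            unfold psiAux
            rw [if_neg (by omega)]
          simp [hψ]
        · rw [if_pos hS]
          refine Finset.sum_congr rfl fun σ _ => ?_
          rw [Finset.prod_mul_distrib, mul_assoc ((∏ i ∈ S, x i)),
            lemM B x σ S, Finset.mul_sum, Finset.mul_sum]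
          refine Finset.sum_congr rfl fun T _ => ?_
          by_cases hm : ∀ i, i ∈ S ↔ σ i ∈ T
          · have hTcard : T.card = S.card := by
              rw [(match_iff_image σ S T).mp hm]
              exact Finset.card_image_of_injective S σ.injective
            have h2S : 2 ≤ S.card := by omega
            have h2T : 2 ≤ T.card := by omega
            rw [if_pos hm]
            unfold psiAux
            rw [if_pos h2S, if_pos h2T, hTcard]
            have h2 : ((Real.sqrt a)⁻¹) ^ S.card * ((Real.sqrt a)⁻¹) ^ S.card
                = a⁻¹ ^ S.card := by
              rw [← mul_pow, ← mul_inv, hsqrt]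
            have expand : (Real.sqrt a * (Real.sqrt a)⁻¹ ^ S.card) *
                (Real.sqrt a * (Real.sqrt a)⁻¹ ^ S.card) = a * a⁻¹ ^ S.card := by
              calc (Real.sqrt a * (Real.sqrt a)⁻¹ ^ S.card) *
                  (Real.sqrt a * (Real.sqrt a)⁻¹ ^ S.card)
                  = (Real.sqrt a * Real.sqrt a) *
                    (((Real.sqrt a)⁻¹) ^ S.card * ((Real.sqrt a)⁻¹) ^ S.card) := by ring
                _ = a * a⁻¹ ^ S.card := by rw [hsqrt, h2]
            linear_combination ((∏ i ∈ S, x i) * (∏ j ∈ T, x j) *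
              (∏ i ∈ univ \ S, B i (σ i))) * expand
          · rw [if_neg hm]
            ring


lemma lemE1 {m : ℕ} (B : Matrix (Fin m) (Fin m) ℝ) (x : Fin m → ℝ) (a : ℝ) :
    a * per (B + a⁻¹ • Matrix.vecMulVec x x)
      = ∑ S ∈ univ.powerset, ∑ σ : Equiv.Perm (Fin m),
          (a * a⁻¹ ^ S.card) * ((∏ i ∈ S, x i * x (σ i)) * ∏ i ∈ univ \ S, B i (σ i)) := by
  unfold per
  have entry : ∀ (σ : Equiv.Perm (Fin m)) i,
      (B + a⁻¹ • Matrix.vecMulVec x x) i (σ i) = a⁻¹ * (x i * x (σ i)) + B i (σ i) := by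
    intro σ i
    simp [Matrix.add_apply, Matrix.vecMulVec_apply, add_comm]
  calc a * ∑ σ : Equiv.Perm (Fin m), ∏ i, (B + a⁻¹ • Matrix.vecMulVec x x) i (σ i)
      = ∑ σ : Equiv.Perm (Fin m), ∑ S ∈ univ.powerset,
          a * ((∏ i ∈ S, a⁻¹ * (x i * x (σ i))) * ∏ i ∈ univ \ S, B i (σ i)) := by
        rw [Finset.mul_sum]
        refine Finset.sum_congr rfl fun σ _ => ?_
        rw [show (∏ i, (B + a⁻¹ • Matrix.vecMulVec x x) i (σ i))
            = ∏ i, (a⁻¹ * (x i * x (σ i)) + B i (σ i)) from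
          Finset.prod_congr rfl fun i _ => entry σ i]
        rw [Finset.prod_add, Finset.mul_sum]
    _ = ∑ S ∈ univ.powerset, ∑ σ : Equiv.Perm (Fin m),
          (a * a⁻¹ ^ S.card) * ((∏ i ∈ S, x i * x (σ i)) * ∏ i ∈ univ \ S, B i (σ i)) := by
        rw [Finset.sum_comm]
        refine Finset.sum_congr rfl fun S _ => Finset.sum_congr rfl fun σ _ => ?_
        rw [Finset.prod_mul_distrib, Finset.prod_const]
        ring


lemma per_submatrix {α β : Type*} [DecidableEq α] [Fintype α] [DecidableEq β] [Fintype β]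
    (A : Matrix α α ℝ) (e : β ≃ α) : per (A.submatrix e e) = per A := by
  unfold per
  rw [← Equiv.sum_comp (Equiv.permCongr e) (fun σ : Equiv.Perm α => ∏ i, A i (σ i))]
  refine Finset.sum_congr rfl fun σ _ => ?_
  rw [← Equiv.prod_comp e (fun j => A j ((Equiv.permCongr e σ) j))]
  refine Finset.prod_congr rfl fun i _ => ?_
  simp [Matrix.submatrix_apply, Equiv.permCongr_apply]

lemma per_option {α : Type*} [DecidableEq α] [Fintype α] (M : Matrix (Option α) (Option α) ℝ) :
    per M = M none none * per (M.submatrix some some)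
      + ∑ j, ∑ τ : Equiv.Perm α, M none (some j) *
          ∏ i, M (some i) (if τ i = j then none else some (τ i)) := by
  unfold per
  rw [← Equiv.sum_comp (Equiv.Perm.decomposeOption.symm :
    Option α × Equiv.Perm α ≃ Equiv.Perm (Option α))
    (fun σ : Equiv.Perm (Option α) => ∏ o, M o (σ o))]
  rw [Fintype.sum_prod_type]
  rw [Fintype.sum_option]
  congr 1
  · rw [Finset.mul_sum]
    refine Fintype.sum_congr _ _ fun τ => ?_
    have h1 : ∀ o, (Equiv.Perm.decomposeOption.symm (none, τ)) o = Option.map τ o :=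
      Equiv.Perm.decomposeOption_symm_of_none_apply τ
    simp only [h1]
    rw [Fintype.prod_option]
    rfl
  · refine Fintype.sum_congr _ _ fun j => ?_
    refine Fintype.sum_congr _ _ fun τ => ?_
    have h0 : (Equiv.Perm.decomposeOption.symm (some j, τ)) none = some j := by
      simp only [Equiv.Perm.decomposeOption_symm_apply, Equiv.Perm.mul_apply,
        Equiv.optionCongr_apply, Option.map_none]
      exact Equiv.swap_apply_left none (some j)
    have h1 : ∀ i, (Equiv.Perm.decomposeOption.symm (some j, τ)) (some i)
        = if τ i = j then none else some (τ i) := by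
      intro i
      simp only [Equiv.Perm.decomposeOption_symm_apply, Equiv.Perm.mul_apply,
        Equiv.optionCongr_apply, Option.map_some]
      by_cases h : τ i = j
      · simp [h]
      · rw [Equiv.swap_apply_of_ne_of_ne (by simp) (by simpa using h)]
        simp [h]
    rw [Fintype.prod_option, h0]
    simp only [h1]

open Finset

def optE (m : ℕ) : Option (Fin m) ≃ (Fin m ⊕ Fin 1) where
  toFun o := o.elim (Sum.inr 0) Sum.inl
  invFun s := Sum.elim some (fun _ => none) s
  left_inv o := by cases o <;> rfl
  right_inv s := by
    rcases s with i | j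
    · rfl
    · have : j = 0 := Subsingleton.elim j 0
      subst this
      rfl

lemma filter_card_le_one (m : ℕ) :
    (univ.powerset.filter (fun S : Finset (Fin m) => S.card ≤ 1))
      = insert (∅ : Finset (Fin m)) (univ.image fun i => {i}) := by
  ext S
  simp only [Finset.mem_filter, Finset.mem_powerset, Finset.mem_insert, Finset.mem_image,
    Finset.mem_univ, true_and, Finset.subset_univ]
  constructor
  · intro h
    rcases Nat.le_one_iff_eq_zero_or_eq_one.mp h with h0 | h1
    · exact Or.inl (Finset.card_eq_zero.mp h0)
    · obtain ⟨i, hi⟩ := Finset.card_eq_one.mp h1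
      exact Or.inr ⟨i, hi.symm⟩
  · rintro (rfl | ⟨i, rfl⟩)
    · simp
    · simp

lemma lemE2 {m : ℕ} (B : Matrix (Fin m) (Fin m) ℝ) (x : Fin m → ℝ) (a : ℝ) (ha : a ≠ 0) :
    per (Matrix.fromBlocks B (Matrix.of fun i (_ : Fin 1) => x i)
        (Matrix.of fun (_ : Fin 1) j => x j)
        (Matrix.of fun (_ : Fin 1) (_ : Fin 1) => a))
      = ∑ S ∈ univ.powerset.filter (fun S : Finset (Fin m) => S.card ≤ 1),
          ∑ σ : Equiv.Perm (Fin m),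
            (a * a⁻¹ ^ S.card) * ((∏ i ∈ S, x i * x (σ i)) * ∏ i ∈ univ \ S, B i (σ i)) := by
  set A := Matrix.fromBlocks B (Matrix.of fun i (_ : Fin 1) => x i)
      (Matrix.of fun (_ : Fin 1) j => x j)
      (Matrix.of fun (_ : Fin 1) (_ : Fin 1) => a) with hA
  -- left side: expand via Option decomposition
  have h1 : per A = per (A.submatrix (optE m) (optE m)) := (per_submatrix A (optE m)).symm
  have hMnn : (A.submatrix (optE m) (optE m)) none none = a := by
    simp [hA, optE, Matrix.submatrix_apply]
  have hMss : ∀ i j, (A.submatrix (optE m) (optE m)) (some i) (some j) = B i j := by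
    intro i j; simp [hA, optE, Matrix.submatrix_apply]
  have hMns : ∀ j, (A.submatrix (optE m) (optE m)) none (some j) = x j := by
    intro j; simp [hA, optE, Matrix.submatrix_apply]
  rw [h1, per_option]
  -- right side: compute the filtered sum
  rw [filter_card_le_one m, Finset.sum_insert (by
    simp only [Finset.mem_image, Finset.mem_univ, true_and]
    rintro ⟨i, hi⟩
    exact (Finset.singleton_ne_empty i) hi),
    Finset.sum_image (fun i _ j _ h => Finset.singleton_injective h)]
  congr 1
  · -- a * per B  =  F ∅
    rw [hMnn]
    have : (A.submatrix (optE m) (optE m)).submatrix some some = B := by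
      ext i j
      exact hMss i j
    rw [this]
    unfold per
    rw [Finset.mul_sum]
    refine Finset.sum_congr rfl fun σ _ => ?_
    simp
  · -- cross terms
    calc ∑ j, ∑ τ : Equiv.Perm (Fin m), (A.submatrix (optE m) (optE m)) none (some j) *
          ∏ i, (A.submatrix (optE m) (optE m)) (some i) (if τ i = j then none else some (τ i))
        = ∑ τ : Equiv.Perm (Fin m), ∑ j, x j *
            ∏ i, (if τ i = j then x i else B i (τ i)) := by
          rw [Finset.sum_comm]
          refine Finset.sum_congr rfl fun τ _ => Finset.sum_congr rfl fun j _ => ?_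
          rw [hMns]
          congr 1
          refine Finset.prod_congr rfl fun i _ => ?_
          by_cases h : τ i = j
          · rw [if_pos h, if_pos h]
            simp [hA, optE, Matrix.submatrix_apply]
          · rw [if_neg h, if_neg h]
            exact hMss i (τ i)
      _ = ∑ τ : Equiv.Perm (Fin m), ∑ i₀, x (τ i₀) *
            (x i₀ * ∏ i ∈ univ.erase i₀, B i (τ i)) := by
          refine Finset.sum_congr rfl fun τ _ => ?_
          rw [← Equiv.sum_comp τ (fun j => x j * ∏ i, (if τ i = j then x i else B i (τ i)))]
          refine Finset.sum_congr rfl fun i₀ _ => ?_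
          congr 1
          have hcond : ∀ i, (if τ i = τ i₀ then x i else B i (τ i))
              = (if i = i₀ then x i else B i (τ i)) := by
            intro i
            simp only [EmbeddingLike.apply_eq_iff_eq]
          rw [Finset.prod_congr rfl (fun i _ => hcond i)]
          rw [← Finset.mul_prod_erase univ _ (Finset.mem_univ i₀), if_pos rfl]
          congr 1
          refine Finset.prod_congr rfl fun i hi => ?_
          rw [if_neg (Finset.ne_of_mem_erase hi)]
      _ = ∑ i₀, ∑ σ : Equiv.Perm (Fin m), (a * a⁻¹ ^ ({i₀} : Finset (Fin m)).card) *
            ((∏ i ∈ {i₀}, x i * x (σ i)) * ∏ i ∈ univ \ {i₀}, B i (σ i)) := by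
          rw [Finset.sum_comm]
          refine Finset.sum_congr rfl fun i₀ _ => Finset.sum_congr rfl fun σ _ => ?_
          rw [Finset.card_singleton, pow_one, mul_inv_cancel₀ ha, Finset.prod_singleton,
            Finset.sdiff_singleton_eq_erase]
          ring


end Helpers

theorem stmt8 {m : ℕ} (B : Matrix (Fin m) (Fin m) ℝ) (x : Fin m → ℝ) (a : ℝ) (ha : 0 < a)
    (hA : (Matrix.fromBlocks B (Matrix.of fun i (_ : Fin 1) => x i)
      (Matrix.of fun (_ : Fin 1) j => x j)
      (Matrix.of fun (_ : Fin 1) (_ : Fin 1) => a)).PosSemidef) :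
    per (Matrix.fromBlocks B (Matrix.of fun i (_ : Fin 1) => x i)
        (Matrix.of fun (_ : Fin 1) j => x j)
        (Matrix.of fun (_ : Fin 1) (_ : Fin 1) => a)) ≤
      a * per (B + a⁻¹ • Matrix.vecMulVec x x) := by
  classical
  -- B is positive semidefinite as a principal submatrix
  have hBsub : B = (Matrix.fromBlocks B (Matrix.of fun i (_ : Fin 1) => x i)
      (Matrix.of fun (_ : Fin 1) j => x j)
      (Matrix.of fun (_ : Fin 1) (_ : Fin 1) => a)).submatrix Sum.inl Sum.inl := by
    ext i j
    simp [Matrix.submatrix_apply]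
  have hBpsd : B.PosSemidef := hBsub ▸ hA.submatrix Sum.inl
  open scoped MatrixOrder in
  obtain ⟨V, hV⟩ := CStarAlgebra.nonneg_iff_eq_star_mul_self.mp hBpsd.nonneg
  replace hV : B = Vᴴ * V := hV
  have hB : ∀ i j, B i j = ∑ r, V r i * V r j := by
    intro i j
    rw [hV]
    simp [Matrix.mul_apply, Matrix.conjTranspose_apply]
  rw [lemE1 B x a]
  rw [← Finset.sum_filter_add_sum_filter_not Finset.univ.powerset
    (fun S : Finset (Fin m) => S.card ≤ 1)
    (fun S => ∑ σ : Equiv.Perm (Fin m),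
      (a * a⁻¹ ^ S.card) * ((∏ i ∈ S, x i * x (σ i)) * ∏ i ∈ Finset.univ \ S, B i (σ i)))]
  rw [← lemE2 B x a ha.ne']
  exact le_add_of_nonneg_right (lemE3 B x a ha (fun i r => V r i) hB)
end

section
/- Let A = V^T V be an n×n real positive semidefinite matrix with columns of V denoted v₁, ..., vₙ. Then per(A) = (1/n!) · ‖Σ_{σ ∈ S_n} v_{σ(1)} ⊗ v_{σ(2)} ⊗ ⋯ ⊗ v_{σ(n)}‖². -/
open Matrix BigOperators

/-- `per(Vᵀ V) = (1/n!) · ‖∑_{σ ∈ S_n} v_{σ(1)} ⊗ ⋯ ⊗ v_{σ(n)}‖²`, where the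
tensor `v₁ ⊗ ⋯ ⊗ vₙ ∈ ℝ^{dⁿ}` is represented by the function
`(f : Fin n → Fin d) ↦ ∏ i, v_i (f i)`, and the squared Euclidean norm is the
sum of squares of coordinates. -/
theorem stmt9 {n d : ℕ} (V : Matrix (Fin d) (Fin n) ℝ) :
    per (Vᵀ * V) =
      (1 / (n.factorial : ℝ)) *
        ∑ f : Fin n → Fin d, (∑ σ : Equiv.Perm (Fin n), ∏ i, V (f i) (σ i)) ^ 2 := by
  have hsum : ∑ f : Fin n → Fin d, (∑ σ : Equiv.Perm (Fin n), ∏ i, V (f i) (σ i)) ^ 2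
      = ∑ σ : Equiv.Perm (Fin n), ∑ τ : Equiv.Perm (Fin n),
          ∏ i, (Vᵀ * V) (σ i) (τ i) := by
    simp_rw [sq, Finset.sum_mul_sum]
    rw [Finset.sum_comm]
    refine Finset.sum_congr rfl fun σ _ => ?_
    rw [Finset.sum_comm]
    refine Finset.sum_congr rfl fun τ _ => ?_
    simp_rw [← Finset.prod_mul_distrib]
    rw [show (∏ i, (Vᵀ * V) (σ i) (τ i)) = ∏ i, ∑ x : Fin d, V x (σ i) * V x (τ i) by
      refine Finset.prod_congr rfl fun i _ => ?_
      simp [Matrix.mul_apply, Matrix.transpose_apply]]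
    rw [Finset.prod_univ_sum]
    simp [Fintype.piFinset_univ]
  have hinner : ∀ σ : Equiv.Perm (Fin n),
      (∑ τ : Equiv.Perm (Fin n), ∏ i, (Vᵀ * V) (σ i) (τ i)) = per (Vᵀ * V) := by
    intro σ
    have h1 : ∀ τ : Equiv.Perm (Fin n),
        (∏ i, (Vᵀ * V) (σ i) (τ i)) = ∏ i, (Vᵀ * V) i ((τ * σ⁻¹) i) := by
      intro τ
      rw [← Equiv.prod_comp σ.symm (fun j => (Vᵀ * V) (σ j) (τ j))]
      simp [Equiv.Perm.mul_apply]
    simp_rw [h1]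
    exact Equiv.sum_comp (Equiv.mulRight σ⁻¹) (fun π => ∏ i, (Vᵀ * V) i (π i))
  rw [hsum]
  simp_rw [hinner]
  rw [Finset.sum_const, Finset.card_univ, Fintype.card_perm, nsmul_eq_mul]
  have : (n.factorial : ℝ) ≠ 0 := Nat.cast_ne_zero.mpr n.factorial_ne_zero
  field_simp
  rw [Fintype.card_fin]
end

section
/- Let A ∈ ℝ^{n×n}_{≥0} be non-negative with all leading diagonal pivot values positive, and define the permanent process: A^{(1)} = A and for t = 1,...,n−1, a^{(t+1)}_{i,j} = a^{(t)}_{i,j} + a^{(t)}_{i,t}·a^{(t)}_{t,j}/a^{(t)}_{t,t} for i, j ≥ t+1, with all other entries unchanged. Then per(A) ≤ Π_{i=1}^{n} a^{(i)}_{i,i}. -/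
open Matrix BigOperators

/-- The permanent process (0-indexed): `proc A 0 = A` corresponds to `A⁽¹⁾`, and the
step producing `proc A (t+1)` uses pivot index `t`, updating the entries `(i,j)` with
`i, j > t` by `a_{i,j} ← a_{i,j} + a_{i,t}·a_{t,j}/a_{t,t}`. -/
noncomputable def proc {n : ℕ} (A : Matrix (Fin n) (Fin n) ℝ) : ℕ → Matrix (Fin n) (Fin n) ℝ
  | 0 => A
  | t + 1 =>
    Matrix.of fun i j =>
      if h : t < (i : ℕ) ∧ t < (j : ℕ) then
        proc A t i j +
          proc A t i ⟨t, h.2.trans j.isLt⟩ * proc A t ⟨t, h.1.trans i.isLt⟩ j /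
            proc A t ⟨t, h.1.trans i.isLt⟩ ⟨t, h.1.trans i.isLt⟩
      else proc A t i j

lemma per_transpose {α : Type*} [DecidableEq α] [Fintype α] (A : Matrix α α ℝ) :
    per Aᵀ = per A := by
  unfold per
  rw [← Equiv.sum_comp (Equiv.inv (Equiv.Perm α)) (fun σ => ∏ i, Aᵀ i (σ i))]
  refine Finset.sum_congr rfl fun σ _ => ?_
  simp only [Equiv.inv_apply, Matrix.transpose_apply]
  rw [← Equiv.prod_comp σ (fun x => A (σ⁻¹ x) x)]
  simp

lemma per_eq_sum_col {α : Type*} [DecidableEq α] [Fintype α] (A : Matrix α α ℝ) :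
    per A = ∑ σ : Equiv.Perm α, ∏ i, A (σ i) i := by
  rw [← per_transpose]; rfl

lemma per_nonneg {α : Type*} [DecidableEq α] [Fintype α] {A : Matrix α α ℝ}
    (h : ∀ i j, 0 ≤ A i j) : 0 ≤ per A :=
  Finset.sum_nonneg fun σ _ => Finset.prod_nonneg fun i _ => h i (σ i)

lemma per_mono {α : Type*} [DecidableEq α] [Fintype α] {A B : Matrix α α ℝ}
    (hA : ∀ i j, 0 ≤ A i j) (h : ∀ i j, A i j ≤ B i j) : per A ≤ per B :=
  Finset.sum_le_sum fun σ _ => Finset.prod_le_prod (fun i _ => hA i (σ i)) (fun i _ => h i (σ i))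

lemma per_updateRow_add {α : Type*} [DecidableEq α] [Fintype α] (M : Matrix α α ℝ)
    (i : α) (x y : α → ℝ) :
    per (M.updateRow i (x + y)) = per (M.updateRow i x) + per (M.updateRow i y) := by
  unfold per
  rw [← Finset.sum_add_distrib]
  refine Finset.sum_congr rfl fun σ _ => ?_
  rw [← Finset.mul_prod_erase _ _ (Finset.mem_univ i),
      ← Finset.mul_prod_erase _ _ (Finset.mem_univ i),
      ← Finset.mul_prod_erase _ _ (Finset.mem_univ i)]
  have h : ∀ (v : α → ℝ), ∏ k ∈ Finset.univ.erase i, (M.updateRow i v) k (σ k)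
      = ∏ k ∈ Finset.univ.erase i, M k (σ k) := fun v =>
    Finset.prod_congr rfl fun k hk => by
      rw [Matrix.updateRow_ne (Finset.ne_of_mem_erase hk)]
  simp [h, Matrix.updateRow_self, add_mul, Pi.add_apply]

lemma per_updateRow_smul {α : Type*} [DecidableEq α] [Fintype α] (M : Matrix α α ℝ)
    (i : α) (c : ℝ) (x : α → ℝ) :
    per (M.updateRow i (c • x)) = c * per (M.updateRow i x) := by
  unfold per
  rw [Finset.mul_sum]
  refine Finset.sum_congr rfl fun σ _ => ?_
  rw [← Finset.mul_prod_erase _ _ (Finset.mem_univ i),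
      ← Finset.mul_prod_erase _ _ (Finset.mem_univ i)]
  have h : ∀ (v : α → ℝ), ∏ k ∈ Finset.univ.erase i, (M.updateRow i v) k (σ k)
      = ∏ k ∈ Finset.univ.erase i, M k (σ k) := fun v =>
    Finset.prod_congr rfl fun k hk => by
      rw [Matrix.updateRow_ne (Finset.ne_of_mem_erase hk)]
  simp [h, Matrix.updateRow_self, Pi.smul_apply, smul_eq_mul, mul_assoc]

lemma per_superadd {α : Type*} [DecidableEq α] [Fintype α] (C D : Matrix α α ℝ)
    (hC : ∀ i j, 0 ≤ C i j) (hD : ∀ i j, 0 ≤ D i j) :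
    per C + ∑ i, per (C.updateRow i (D i)) ≤ per (C + D) := by
  have main : ∀ s : Finset α,
      per C + ∑ i ∈ s, per (C.updateRow i (D i)) ≤
        per (Matrix.of fun i j => C i j + if i ∈ s then D i j else 0) := by
    intro s
    induction s using Finset.induction_on with
    | empty => simp; exact le_of_eq rfl
    | @insert a s ha ih =>
      have hrow : (Matrix.of fun i j => C i j + if i ∈ insert a s then D i j else 0) =
          Matrix.updateRow (Matrix.of fun i j => C i j + if i ∈ s then D i j else 0) a
            ((fun j => C a j) + (fun j => D a j)) := by
        ext i j
        by_cases h : i = a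
        · subst h; simp [Matrix.updateRow_self]
        · simp [Matrix.updateRow_ne h, Finset.mem_insert, h]
      rw [hrow, per_updateRow_add]
      have h1 : Matrix.updateRow (Matrix.of fun i j => C i j + if i ∈ s then D i j else 0) a
          (fun j => C a j) = (Matrix.of fun i j => C i j + if i ∈ s then D i j else 0) := by
        ext i j
        by_cases h : i = a
        · subst h; simp [Matrix.updateRow_self, ha]
        · simp [Matrix.updateRow_ne h]
      rw [h1, Finset.sum_insert ha]
      have h2 : per (C.updateRow a (D a)) ≤
          per (Matrix.updateRow (Matrix.of fun i j => C i j + if i ∈ s then D i j else 0) a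
            (fun j => D a j)) := by
        apply per_mono
        · intro i j
          by_cases h : i = a
          · subst h; simp [Matrix.updateRow_self]; exact hD i j
          · simp [Matrix.updateRow_ne h]; exact hC i j
        · intro i j
          by_cases h : i = a
          · subst h; simp [Matrix.updateRow_self]
          · simp [Matrix.updateRow_ne h]
            have := hD i j; positivity
      linarith
  have := main Finset.univ
  have h' : per C + ∑ i, per (C.updateRow i (D i)) ≤
      per (Matrix.of fun i j => C i j + D i j) := by simpa using this
  exact h'

lemma per_expand {n : ℕ} (A : Matrix (Fin (n+1)) (Fin (n+1)) ℝ) :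
    per A = A 0 0 * per (Matrix.of fun i j : Fin n => A i.succ j.succ) +
      ∑ i : Fin n, A i.succ 0 *
        per (Matrix.updateRow (Matrix.of fun i j : Fin n => A i.succ j.succ) i
          (fun j => A 0 j.succ)) := by
  rw [per_eq_sum_col]
  rw [← Equiv.sum_comp Equiv.Perm.decomposeFin.symm
      (fun σ => ∏ j, A (σ j) j), Fintype.sum_prod_type]
  have hterm : ∀ (p : Fin (n+1)) (τ : Equiv.Perm (Fin n)),
      ∏ j, A (Equiv.Perm.decomposeFin.symm (p, τ) j) j =
        A p 0 * ∏ x : Fin n, A (Equiv.swap 0 p ((τ x).succ)) x.succ := by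
    intro p τ
    rw [Fin.prod_univ_succ]
    simp [Equiv.Perm.decomposeFin_symm_apply_zero, Equiv.Perm.decomposeFin_symm_apply_succ]
  simp only [hterm]
  rw [Fin.sum_univ_succ]
  congr 1
  · rw [← Finset.mul_sum]
    congr 1
    rw [per_eq_sum_col]
    refine Finset.sum_congr rfl fun τ _ => Finset.prod_congr rfl fun x _ => ?_
    simp
  · refine Finset.sum_congr rfl fun i _ => ?_
    rw [← Finset.mul_sum]
    congr 1
    rw [per_eq_sum_col]
    refine Finset.sum_congr rfl fun τ _ => Finset.prod_congr rfl fun x _ => ?_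
    by_cases h : τ x = i
    · rw [h, Equiv.swap_apply_right, Matrix.updateRow_self]
    · rw [Equiv.swap_apply_of_ne_of_ne (Fin.succ_ne_zero _)
        (by simpa using h), Matrix.updateRow_ne h]
      rfl

lemma key_step {n : ℕ} (A : Matrix (Fin (n+1)) (Fin (n+1)) ℝ)
    (hA : ∀ i j, 0 ≤ A i j) (h0 : 0 < A 0 0) :
    per A ≤ A 0 0 *
      per (Matrix.of fun i j : Fin n =>
        A i.succ j.succ + A i.succ 0 * A 0 j.succ / A 0 0) := by
  set C : Matrix (Fin n) (Fin n) ℝ := Matrix.of fun i j => A i.succ j.succ with hC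
  set D : Matrix (Fin n) (Fin n) ℝ :=
    Matrix.of fun i j => A i.succ 0 * A 0 j.succ / A 0 0 with hD
  have hBD : (Matrix.of fun i j : Fin n =>
      A i.succ j.succ + A i.succ 0 * A 0 j.succ / A 0 0) = C + D := by
    ext i j; simp [hC, hD]
  rw [hBD]
  have hCpos : ∀ i j, 0 ≤ C i j := fun i j => hA _ _
  have hDpos : ∀ i j, 0 ≤ D i j := fun i j => by
    simp only [hD, Matrix.of_apply]
    exact div_nonneg (mul_nonneg (hA _ _) (hA _ _)) h0.le
  have hsup := per_superadd C D hCpos hDpos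
  have hrow : ∀ i : Fin n, per (C.updateRow i (D i)) =
      (A i.succ 0 / A 0 0) * per (C.updateRow i (fun j => A 0 j.succ)) := by
    intro i
    rw [← per_updateRow_smul]
    have hr : D i = (A i.succ 0 / A 0 0) • fun j => A 0 j.succ := by
      funext j
      simp only [hD, Matrix.of_apply, Pi.smul_apply, smul_eq_mul]
      rw [div_mul_eq_mul_div]
    rw [hr]
  have hexp := per_expand A
  have hne : A 0 0 ≠ 0 := ne_of_gt h0
  calc per A = A 0 0 * per C + ∑ i : Fin n, A i.succ 0 *
        per (C.updateRow i (fun j => A 0 j.succ)) := hexp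
    _ = A 0 0 * (per C + ∑ i : Fin n, per (C.updateRow i (D i))) := by
        rw [mul_add, Finset.mul_sum]
        congr 1
        refine Finset.sum_congr rfl fun i _ => ?_
        rw [hrow i, ← mul_assoc, mul_div_cancel₀ _ hne]
    _ ≤ A 0 0 * per (C + D) := by
        apply mul_le_mul_of_nonneg_left hsup (le_of_lt h0)

lemma proc_submatrix {n : ℕ} (A : Matrix (Fin (n+1)) (Fin (n+1)) ℝ) (t : ℕ) :
    proc ((proc A 1).submatrix Fin.succ Fin.succ) t =
      (proc A (t+1)).submatrix Fin.succ Fin.succ := by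
  induction t with
  | zero => rfl
  | succ t ih =>
    funext i j
    show (proc ((proc A 1).submatrix Fin.succ Fin.succ) (t+1)) i j =
      (proc A (t+1+1)) i.succ j.succ
    conv_lhs => rw [proc]
    conv_rhs => rw [proc]
    rw [ih]
    simp only [Matrix.of_apply, Matrix.submatrix_apply]
    have hi : ((i.succ : Fin (n+1)) : ℕ) = (i : ℕ) + 1 := Fin.val_succ i
    have hj : ((j.succ : Fin (n+1)) : ℕ) = (j : ℕ) + 1 := Fin.val_succ j
    by_cases h : t < (i : ℕ) ∧ t < (j : ℕ)
    · rw [dif_pos h, dif_pos (by omega : t + 1 < ((i.succ : Fin (n+1)) : ℕ) ∧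
        t + 1 < ((j.succ : Fin (n+1)) : ℕ))]
      rfl
    · rw [dif_neg h, dif_neg (by omega : ¬(t + 1 < ((i.succ : Fin (n+1)) : ℕ) ∧
        t + 1 < ((j.succ : Fin (n+1)) : ℕ)))]

/-- The permanent of a non-negative matrix is at most the product of the diagonal
pivots produced by the permanent process. -/
theorem stmt11 {n : ℕ} (A : Matrix (Fin n) (Fin n) ℝ)
    (hA : ∀ i j, 0 ≤ A i j) (hpiv : ∀ t : Fin n, 0 < proc A (t : ℕ) t t) :
    per A ≤ ∏ i : Fin n, proc A (i : ℕ) i i := by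
  induction n with
  | zero =>
    have h1 : per A = 1 := by
      unfold per
      simp
    rw [h1]
    simp
  | succ n ih =>
    have h00 : 0 < A 0 0 := hpiv 0
    set B : Matrix (Fin n) (Fin n) ℝ :=
      Matrix.of fun i j => A i.succ j.succ + A i.succ 0 * A 0 j.succ / A 0 0 with hB
    have hBeq : B = (proc A 1).submatrix Fin.succ Fin.succ := by
      ext i j
      show A i.succ j.succ + A i.succ 0 * A 0 j.succ / A 0 0 = proc A 1 i.succ j.succ
      conv_rhs => rw [proc]
      rw [Matrix.of_apply, dif_pos (by simp [Fin.val_succ] : 0 < ((i.succ : Fin (n+1)) : ℕ) ∧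
        0 < ((j.succ : Fin (n+1)) : ℕ))]
      rfl
    have hBpos : ∀ i j, 0 ≤ B i j := fun i j => by
      show 0 ≤ A i.succ j.succ + A i.succ 0 * A 0 j.succ / A 0 0
      have := hA i.succ j.succ
      have := div_nonneg (mul_nonneg (hA i.succ 0) (hA 0 j.succ)) h00.le
      linarith
    have hproc : ∀ t : ℕ, proc B t = (proc A (t+1)).submatrix Fin.succ Fin.succ := by
      intro t; rw [hBeq]; exact proc_submatrix A t
    have hBpiv : ∀ t : Fin n, 0 < proc B (t : ℕ) t t := by
      intro t
      rw [hproc]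
      have := hpiv t.succ
      simpa [Fin.val_succ] using this
    have hkey := key_step A hA h00
    have hih := ih B hBpos hBpiv
    calc per A ≤ A 0 0 * per B := hkey
      _ ≤ A 0 0 * ∏ i : Fin n, proc B (i : ℕ) i i :=
          mul_le_mul_of_nonneg_left hih h00.le
      _ = ∏ i : Fin (n+1), proc A (i : ℕ) i i := by
          rw [Fin.prod_univ_succ]
          congr 1
          refine Finset.prod_congr rfl fun i _ => ?_
          rw [hproc]
          simp [Fin.val_succ]
end

section
/- Let c > 1 and let A be the n×n matrix with entries a_{i,j} = c^{−|i−j|}. Apply the permanent process (A^{(1)} = A; a^{(t+1)}_{i,j} = a^{(t)}_{i,j} + a^{(t)}_{i,t}·a^{(t)}_{t,j}/a^{(t)}_{t,t} for i,j ≥ t+1). Then for all i, j, the final entries satisfy a^{(n)}_{i,j} = c^{−|i−j|} · (1 + Σ_{k=1}^{min(i,j)−1} 2^{k−1}·c^{−2k}). -/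
open Matrix BigOperators

noncomputable def gfun (c : ℝ) (s : ℕ) : ℝ :=
  ∑ k ∈ Finset.Icc 1 s, (2 : ℝ) ^ (k - 1) * c ^ (-(2 * (k : ℤ)))

lemma gfun_zero (c : ℝ) : gfun c 0 = 0 := by simp [gfun]

lemma gfun_top (c : ℝ) (s : ℕ) :
    gfun c (s + 1) = gfun c s + (2 : ℝ) ^ s * c ^ (-(2 * ((s : ℤ) + 1))) := by
  rw [gfun, gfun, Finset.sum_Icc_succ_top (by omega : 1 ≤ s + 1)]
  push_cast [Nat.add_sub_cancel]
  ring

lemma gfun_succ (c : ℝ) (hc : c ≠ 0) (s : ℕ) :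
    gfun c (s + 1) = c ^ (-2 : ℤ) * (1 + 2 * gfun c s) := by
  induction s with
  | zero => simp [gfun_top, gfun_zero]
  | succ s ih =>
      have h4 := gfun_top c (s + 1)
      have h5 := gfun_top c s
      have hX : c ^ (-(2 * (((s + 1 : ℕ) : ℤ) + 1))) =
          c ^ (-2 : ℤ) * c ^ (-(2 * ((s : ℤ) + 1))) := by
        have he : (-(2 * (((s + 1 : ℕ) : ℤ) + 1))) = (-2) + (-(2 * ((s : ℤ) + 1))) := by
          push_cast; ring
        rw [he, zpow_add₀ hc]
      rw [h4, hX, ih, pow_succ]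
      have h6 : (2 : ℝ) ^ s * c ^ (-(2 * ((s : ℤ) + 1))) =
          c ^ (-2 : ℤ) * (1 + 2 * gfun c s) - gfun c s := by
        rw [← ih, h5]; ring
      linear_combination (2 * c ^ (-2 : ℤ)) * h6

lemma gfun_nonneg (c : ℝ) (hc : 0 < c) (s : ℕ) : 0 ≤ gfun c s := by
  refine Finset.sum_nonneg fun k _ => ?_
  positivity

lemma key {n : ℕ} (c : ℝ) (hc : 1 < c) (A : Matrix (Fin n) (Fin n) ℝ)
    (hA : ∀ i j : Fin n, A i j = c ^ (-|((i : ℕ) : ℤ) - ((j : ℕ) : ℤ)|)) :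
    ∀ t : ℕ, ∀ i j : Fin n,
      proc A t i j =
        c ^ (-|((i : ℕ) : ℤ) - ((j : ℕ) : ℤ)|) +
          c ^ (-(((i : ℕ) : ℤ) + ((j : ℕ) : ℤ)) + 2 * ((min (min (i : ℕ) (j : ℕ)) t : ℕ) : ℤ)) *
            gfun c (min (min (i : ℕ) (j : ℕ)) t) := by
  have hc0 : (0 : ℝ) < c := lt_trans one_pos hc
  have hcne : c ≠ 0 := ne_of_gt hc0
  intro t
  induction t with
  | zero =>
      intro i j
      simp [proc, hA, gfun_zero]
  | succ t ih =>
      intro i j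
      simp only [proc, Matrix.of_apply]
      split_ifs with h
      · obtain ⟨hi, hj⟩ := id h
        set G := gfun c t with hG
        have hGnn : 0 ≤ G := gfun_nonneg c hc0 t
        have hGne : (1 : ℝ) + G ≠ 0 := by linarith
        set I : ℤ := ((i : ℕ) : ℤ) with hI
        set J : ℤ := ((j : ℕ) : ℤ) with hJ
        have hti : (t : ℤ) ≤ I := by rw [hI]; exact_mod_cast le_of_lt hi
        have htj : (t : ℤ) ≤ J := by rw [hJ]; exact_mod_cast le_of_lt hj
        have hvt1 : ((⟨t, h.1.trans i.isLt⟩ : Fin n) : ℕ) = t := rfl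
        have hvt2 : ((⟨t, h.2.trans j.isLt⟩ : Fin n) : ℕ) = t := rfl
        have hmij : min (min (i : ℕ) (j : ℕ)) (t + 1) = t + 1 := by omega
        have hmit : min (min (i : ℕ) t) t = t := by omega
        have hmtj : min (min t (j : ℕ)) t = t := by omega
        have hmtt : min (min t t) t = t := by omega
        have A0 : proc A t i j =
            c ^ (-|I - J|) + c ^ (-(I + J) + 2 * ((min (min (i : ℕ) (j : ℕ)) t : ℕ) : ℤ)) *
              gfun c (min (min (i : ℕ) (j : ℕ)) t) := ih i j
        have A1 : proc A t i ⟨t, h.2.trans j.isLt⟩ = c ^ ((t : ℤ) - I) * (1 + G) := by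
          rw [ih i ⟨t, h.2.trans j.isLt⟩]
          simp only [hvt2, hmit]
          have habs : -|I - (t : ℤ)| = (t : ℤ) - I := by
            rw [abs_of_nonneg (by omega)]; ring
          have hexp : -(I + (t : ℤ)) + 2 * (t : ℤ) = (t : ℤ) - I := by ring
          rw [habs, hexp, ← hG]; ring
        have A2 : proc A t ⟨t, h.1.trans i.isLt⟩ j = c ^ ((t : ℤ) - J) * (1 + G) := by
          rw [ih ⟨t, h.1.trans i.isLt⟩ j]
          simp only [hvt1, hmtj]
          have habs : -|(t : ℤ) - J| = (t : ℤ) - J := by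
            rw [abs_sub_comm, abs_of_nonneg (by omega)]; ring
          have hexp : -((t : ℤ) + J) + 2 * (t : ℤ) = (t : ℤ) - J := by ring
          rw [habs, hexp, ← hG]; ring
        have A3 : proc A t ⟨t, h.1.trans i.isLt⟩ ⟨t, h.1.trans i.isLt⟩ = 1 + G := by
          rw [ih ⟨t, h.1.trans i.isLt⟩ ⟨t, h.1.trans i.isLt⟩]
          simp only [hvt1, hmtt]
          have habs : -|(t : ℤ) - (t : ℤ)| = 0 := by simp
          have hexp : -((t : ℤ) + (t : ℤ)) + 2 * (t : ℤ) = 0 := by ring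
          rw [habs, hexp, ← hG]; simp
        rw [A0, A1, A2, A3, hmij]
        have hmm : min (min (i : ℕ) (j : ℕ)) t = t := by omega
        rw [hmm, gfun_succ c hcne t, ← hG]
        set P : ℝ := c ^ (-(I + J) + 2 * (t : ℤ)) with hP
        have hP1 : c ^ ((t : ℤ) - I) * c ^ ((t : ℤ) - J) = P := by
          rw [hP, ← zpow_add₀ hcne]; ring_nf
        have hcast : ((t + 1 : ℕ) : ℤ) = (t : ℤ) + 1 := by push_cast; ring
        have hP2 : c ^ (-(I + J) + 2 * ((t + 1 : ℕ) : ℤ)) = P * c ^ (2 : ℤ) := by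
          rw [hcast, hP, ← zpow_add₀ hcne]; ring_nf
        rw [hP2]
        have hdiv : c ^ ((t : ℤ) - I) * (1 + G) * (c ^ ((t : ℤ) - J) * (1 + G)) / (1 + G)
            = P * (1 + G) := by
          rw [← hP1]; field_simp
        rw [hdiv]
        have hc2 : c ^ (2 : ℤ) * c ^ (-2 : ℤ) = 1 := by
          rw [← zpow_add₀ hcne]; norm_num
        have hfin : P * c ^ (2 : ℤ) * (c ^ (-2 : ℤ) * (1 + 2 * G)) = P * (1 + 2 * G) := by
          calc P * c ^ (2 : ℤ) * (c ^ (-2 : ℤ) * (1 + 2 * G))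
              = P * (1 + 2 * G) * (c ^ (2 : ℤ) * c ^ (-2 : ℤ)) := by ring
            _ = P * (1 + 2 * G) := by rw [hc2, mul_one]
        rw [hfin]; ring
      · have hmm : min (min (i : ℕ) (j : ℕ)) (t + 1) = min (min (i : ℕ) (j : ℕ)) t := by
          omega
        rw [hmm]
        exact ih i j

/-- Closed form of the permanent process applied to the matrix `a_{i,j} = c^{−|i−j|}`.
(0-based indices: `min(i,j) − 1` of the 1-based statement becomes `min i j`.) -/
theorem stmt15 {n : ℕ} (c : ℝ) (hc : 1 < c) (A : Matrix (Fin n) (Fin n) ℝ)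
    (hA : ∀ i j : Fin n, A i j = c ^ (-|((i : ℕ) : ℤ) - ((j : ℕ) : ℤ)|)) :
    ∀ i j : Fin n,
      proc A n i j =
        c ^ (-|((i : ℕ) : ℤ) - ((j : ℕ) : ℤ)|) *
          (1 + ∑ k ∈ Finset.Icc 1 (min (i : ℕ) (j : ℕ)),
            (2 : ℝ) ^ (k - 1) * c ^ (-(2 * (k : ℤ)))) := by
  intro i j
  rw [key c hc A hA n i j]
  have hmm : min (min (i : ℕ) (j : ℕ)) n = min (i : ℕ) (j : ℕ) := by
    have := i.isLt; omega
  rw [hmm]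
  have hexp : -(((i : ℕ) : ℤ) + ((j : ℕ) : ℤ)) + 2 * ((min (i : ℕ) (j : ℕ) : ℕ) : ℤ)
      = -|((i : ℕ) : ℤ) - ((j : ℕ) : ℤ)| := by
    rcases le_total (i : ℕ) (j : ℕ) with hle | hle
    · rw [min_eq_left hle, abs_of_nonpos (by omega)]; ring
    · rw [min_eq_right hle, abs_of_nonneg (by omega)]; ring
  rw [hexp]
  have hsum : (∑ k ∈ Finset.Icc 1 (min (i : ℕ) (j : ℕ)),
      (2 : ℝ) ^ (k - 1) * c ^ (-(2 * (k : ℤ)))) = gfun c (min (i : ℕ) (j : ℕ)) := rfl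
  rw [hsum]; ring
end
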